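/- Every element of AO_n of rank n-1 is a product of elements from the generating set {x_1,...,x_n}; specifically, for any 1 ≤ i, j ≤ n of the same parity, the unique order-preserving bijection from {1,...,n}\{i} to {1,...,n}\{j} is a product of the x_k's. -/

import Mathlib

/-- Partial transformations on `Fin n`, represented as `Option`-valued maps. -/
abbrev PT (n : ℕ) := Fin n → Option (Fin n)

/-- Left-to-right composition of partial maps: `x (pcomp f g) = (x f) g`. -/
def pcomp {n : ℕ} (f g : PT n) : PT n := fun x => (f x).bind g

/-- The identity partial map. -/
def pid (n : ℕ) : PT n := fun x => some x

instance PTMonoid (n : ℕ) : Monoid (PT n) where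
  mul := pcomp
  one := pid n
  mul_assoc f g h := funext fun x => by
    show ((f x).bind g).bind h = (f x).bind fun y => (g y).bind h
    cases f x <;> rfl
  one_mul f := rfl
  mul_one f := funext fun x => by
    show (f x).bind (fun y => some y) = f x
    cases f x <;> rfl

/-- `f` is injective on its domain. -/
def pInj {n : ℕ} (f : PT n) : Prop := ∀ x y a, f x = some a → f y = some a → x = y

/-- The domain of a partial map. -/
def pDom {n : ℕ} (f : PT n) : Finset (Fin n) := Finset.univ.filter fun x => (f x).isSome

/-- The image of a partial map. -/
def pIm {n : ℕ} (f : PT n) : Finset (Fin n) := Finset.univ.filter fun b => ∃ x, f x = some b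

/-- The rank of a partial map is the size of its domain. -/
def prank {n : ℕ} (f : PT n) : ℕ := (pDom f).card

/-- Order-preserving partial maps. -/
def orderPres {n : ℕ} (f : PT n) : Prop :=
  ∀ x y a b, f x = some a → f y = some b → x ≤ y → a ≤ b

/-- Order-reversing partial maps. -/
def orderRev {n : ℕ} (f : PT n) : Prop :=
  ∀ x y a b, f x = some a → f y = some b → x ≤ y → b ≤ a

/-- Monotone partial maps. -/
def isMonotonePT {n : ℕ} (f : PT n) : Prop := orderPres f ∨ orderRev f

/-- The permutation `σ` extends the partial map `f`. -/
def extendsTo {n : ℕ} (σ : Equiv.Perm (Fin n)) (f : PT n) : Prop :=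
  ∀ x a, f x = some a → σ x = a

/-- Membership in the alternating inverse monoid `AI_n`: an injective partial map of
rank `≤ n - 2`, or one that extends to an even permutation. -/
def inAI {n : ℕ} (f : PT n) : Prop :=
  pInj f ∧ (prank f + 2 ≤ n ∨
    ∃ σ : Equiv.Perm (Fin n), σ ∈ alternatingGroup (Fin n) ∧ extendsTo σ f)

/-- `AO_n = AI_n ∩ POI_n`. -/
def AO (n : ℕ) : Set (PT n) := {f | orderPres f ∧ inAI f}

/-- `AM_n = AI_n ∩ PMI_n`. -/
def AM (n : ℕ) : Set (PT n) := {f | isMonotonePT f ∧ inAI f}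

/-- Green's `J`-relation relative to a submonoid-like subset `S` (containing the identity):
`a J b` iff each lies in the two-sided principal ideal of the other. -/
def JRelIn {n : ℕ} (S : Set (PT n)) (a b : PT n) : Prop :=
  (∃ u v, u ∈ S ∧ v ∈ S ∧ a = u * b * v) ∧ (∃ u v, u ∈ S ∧ v ∈ S ∧ b = u * a * v)

/-- The (unique) order-preserving bijection from `Fin n \ {i}` onto `Fin n \ {j}`. -/
def opBij {n : ℕ} (i j : Fin n) : PT n := fun x =>
  if hx : x = i then none
  else if hlt : x.val < i.val then
    (if hp : x.val < j.val then some ⟨x.val, lt_trans hp j.isLt⟩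
     else some ⟨x.val + 1, by have := i.isLt; omega⟩)
  else
    (if hp : x.val - 1 < j.val then some ⟨x.val - 1, lt_trans hp j.isLt⟩
     else some ⟨x.val, x.isLt⟩)

/-- The generators `x_1, …, x_n` of `AO_n` (indexed 1-based by `i`):
`x_1 : X_1 → X_n` (`n` odd) or `X_1 → X_{n-1}` (`n` even); `x_2 : X_2 → X_{n-1}` (`n` odd)
or `X_2 → X_n` (`n` even); `x_i : X_i → X_{i-2}` for `3 ≤ i ≤ n`. -/
def xg (n : ℕ) (hn : 2 ≤ n) (i : ℕ) : PT n :=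
  if h3 : 3 ≤ i ∧ i ≤ n then opBij ⟨i - 1, by omega⟩ ⟨i - 3, by omega⟩
  else if i = 1 then
    opBij ⟨0, by omega⟩ (if n % 2 = 1 then ⟨n - 1, by omega⟩ else ⟨n - 2, by omega⟩)
  else
    opBij ⟨1, by omega⟩ (if n % 2 = 1 then ⟨n - 2, by omega⟩ else ⟨n - 1, by omega⟩)

/-- The generating set `{x_1, …, x_n}` of `AO_n`. -/
def AOgens (n : ℕ) (hn : 2 ≤ n) : Set (PT n) :=
  {f | ∃ i : ℕ, 1 ≤ i ∧ i ≤ n ∧ f = xg n hn i}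

lemma opBij_comp {n : ℕ} (i j k : Fin n) : opBij i j * opBij j k = opBij i k := by
  funext x
  show ((opBij i j) x).bind (opBij j k) = opBij i k x
  rcases x with ⟨x, hx⟩; rcases i with ⟨i,hi⟩; rcases j with ⟨j,hj⟩; rcases k with ⟨k,hk⟩
  unfold opBij
  simp only [Fin.mk.injEq]
  split_ifs <;> simp only [Option.bind_none, Option.bind_some, Fin.mk.injEq] <;>
    split_ifs <;> first
      | rfl
      | (simp only [Option.some.injEq, Fin.mk.injEq]; omega)
      | omega

lemma mem_step {n : ℕ} (hn : 2 ≤ n) (i : Fin n) (h2 : 2 ≤ i.val) :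
    opBij i ⟨i.val - 2, by have := i.isLt; omega⟩ ∈ AOgens n hn := by
  refine ⟨i.val + 1, by omega, by have := i.isLt; omega, ?_⟩
  unfold xg
  rw [dif_pos ⟨by omega, by have := i.isLt; omega⟩]
  congr 1 <;> exact Fin.ext (by simp)

lemma mem_jump {n : ℕ} (hn : 2 ≤ n) (b : ℕ) (hb : b < 2) (t : ℕ)
    (htv : t = if (n-1) % 2 = b then n-1 else n-2) (htn : t < n) (hbn : b < n) :
    opBij ⟨b, hbn⟩ ⟨t, htn⟩ ∈ AOgens n hn := by
  have hcase : (t = n-1 ∧ (n-1)%2 = b) ∨ (t = n-2 ∧ ¬(n-1)%2 = b) := by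
    rw [htv]; split_ifs with h <;> simp [h]
  interval_cases b
  · refine ⟨1, le_refl 1, by omega, ?_⟩
    unfold xg
    rw [dif_neg (show ¬((3:ℕ) ≤ 1 ∧ 1 ≤ n) by omega), if_pos rfl]
    have ha : (⟨t, htn⟩ : Fin n)
        = (if n % 2 = 1 then ⟨n-1, by omega⟩ else ⟨n-2, by omega⟩) := by
      rcases hcase with ⟨h1,h2⟩|⟨h1,h2⟩ <;> split_ifs with h <;>
        (simp only [Fin.mk.injEq]; omega)
    rw [ha]
  · refine ⟨2, by omega, by omega, ?_⟩
    unfold xg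
    rw [dif_neg (show ¬((3:ℕ) ≤ 2 ∧ 2 ≤ n) by omega), if_neg (show (2:ℕ) ≠ 1 by omega)]
    have ha : (⟨t, htn⟩ : Fin n)
        = (if n % 2 = 1 then ⟨n-2, by omega⟩ else ⟨n-1, by omega⟩) := by
      rcases hcase with ⟨h1,h2⟩|⟨h1,h2⟩ <;> split_ifs with h <;>
        (simp only [Fin.mk.injEq]; omega)
    rw [ha]

lemma mem_desc {n : ℕ} (hn : 2 ≤ n) : ∀ (d : ℕ) (i j : Fin n), i.val = j.val + 2 * d + 2 →
    opBij i j ∈ Submonoid.closure (AOgens n hn) := by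
  intro d
  induction d with
  | zero =>
    intro i j h
    have hj : j = ⟨i.val - 2, by have := i.isLt; omega⟩ := Fin.ext (by simp; omega)
    rw [hj]
    exact Submonoid.subset_closure (mem_step hn i (by omega))
  | succ d ih =>
    intro i j h
    have hi := i.isLt
    rw [show opBij i j = opBij i ⟨i.val - 2, by omega⟩ * opBij ⟨i.val - 2, by omega⟩ j from
      (opBij_comp _ _ _).symm]
    exact mul_mem (Submonoid.subset_closure (mem_step hn i (by omega))) (ih _ _ (by simp; omega))

/-- every rank-`n-1` element of `AO_n`, i.e. every order-preserving bijection
`X_i → X_j` with `i ≡ j (mod 2)`, is a product of the generators `x_1, …, x_n`. -/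
theorem stmt17 {n : ℕ} (hn : 2 ≤ n) (i j : Fin n) (hpar : i.val % 2 = j.val % 2) :
    opBij i j ∈ Submonoid.closure (AOgens n hn) := by
  have hin := i.isLt; have hjn := j.isLt
  rcases lt_or_ge j.val i.val with hji | hij
  · exact mem_desc hn ((i.val - j.val)/2 - 1) i j (by omega)
  · obtain ⟨b, hb⟩ : ∃ b, i.val % 2 = b := ⟨_, rfl⟩
    have hb2 : b < 2 := by omega
    obtain ⟨t, ht⟩ : ∃ t, (if (n-1) % 2 = b then n-1 else n-2) = t := ⟨_, rfl⟩
    have hts : (t = n-1 ∧ (n-1)%2 = b) ∨ (t = n-2 ∧ ¬(n-1)%2 = b) := by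
      rw [← ht]; split_ifs with h <;> simp [h]
    have htn : t < n := by rcases hts with ⟨h1,h2⟩|⟨h1,h2⟩ <;> omega
    have htb : t % 2 = b := by rcases hts with ⟨h1,h2⟩|⟨h1,h2⟩ <;> omega
    have hjt : j.val ≤ t := by rcases hts with ⟨h1,h2⟩|⟨h1,h2⟩ <;> omega
    have hbn : b < n := by omega
    have hjump : opBij ⟨b, hbn⟩ ⟨t, htn⟩ ∈ Submonoid.closure (AOgens n hn) :=
      Submonoid.subset_closure (mem_jump hn b hb2 t ht.symm htn hbn)
    rcases lt_or_ge i.val 2 with hi2 | hi2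
    · have hieq : i = ⟨b, hbn⟩ := Fin.ext (by simp; omega)
      rcases eq_or_lt_of_le hjt with hteq | hltj
      · have hjeq : j = ⟨t, htn⟩ := Fin.ext (by simp; omega)
        rw [hieq, hjeq]; exact hjump
      · rw [hieq, ← opBij_comp ⟨b, hbn⟩ ⟨t, htn⟩ j]
        exact mul_mem hjump (mem_desc hn ((t - j.val)/2 - 1) ⟨t, htn⟩ j (by simp; omega))
    · have p1 := mem_desc hn ((i.val - b)/2 - 1) i ⟨b, hbn⟩ (by simp; omega)
      rcases eq_or_lt_of_le hjt with hteq | hltj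
      · have hjeq : j = ⟨t, htn⟩ := Fin.ext (by simp; omega)
        rw [hjeq, ← opBij_comp i ⟨b, hbn⟩ ⟨t, htn⟩]
        exact mul_mem p1 hjump
      · rw [← opBij_comp i ⟨b, hbn⟩ j, ← opBij_comp ⟨b, hbn⟩ ⟨t, htn⟩ j]
        exact mul_mem p1 (mul_mem hjump (mem_desc hn ((t - j.val)/2 - 1) ⟨t, htn⟩ j (by simp; omega)))
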